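/- Let (M,g) be a perfect fluid space-time of dimension n ≥ 4 with divergence-free Weyl tensor, energy density μ and pressure p related by a differentiable equation of state p = p(μ), and p + μ nowhere zero. Then the velocity field u is geodesic: u^k ∇_k u_j = 0. -/
import Mathlib


/-!
STATEMENT 17.  Perfect fluid space-time of dimension n ≥ 4 arising from Einstein's
equations (R_{ij} = κ(p+μ)u_iu_j + (κ(p-μ)/(2-n))g_{ij}, so A = κ(p-μ)/(2-n),
B = κ(p+μ)), with divergence-free Weyl tensor, a differentiable equation of state
p = P(μ), and p + μ nowhere zero.  Then the velocity field u is geodesic: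
u^k ∇_k u_j = 0.
Component-level formalization; the divergence-free Weyl condition is expressed in
its equivalent Codazzi form, and the equations of motion (from ∇_k T^{kj} = 0,
a consequence of Einstein's equations and the Bianchi identity) are included as
structural hypotheses.
-/
theorem perfect_fluid_eos_geodesic
    (n : ℕ) (hn : 4 ≤ n) (M : Type*)
    (g ginv : M → Fin n → Fin n → ℝ)
    (p μ : M → ℝ) (Dp Dμ : M → Fin n → ℝ)
    (u : M → Fin n → ℝ) (Du : M → Fin n → Fin n → ℝ)
    (κ : ℝ) (hκ : κ ≠ 0) (P : ℝ → ℝ)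
    (hg : ∀ x i j, g x i j = g x j i)
    (hginv : ∀ x i j, ∑ m, ginv x i m * g x m j = if i = j then (1:ℝ) else 0)
    (hginvsymm : ∀ x i j, ginv x i j = ginv x j i)
    -- u is a unit timelike vector field: u^j u_j = -1, hence u^l ∇_k u_l = 0
    (hunit : ∀ x, ∑ i, ∑ j, ginv x i j * u x i * u x j = -1)
    (hDu : ∀ x k, ∑ l, ∑ m, ginv x l m * u x m * Du x k l = 0)
    -- differentiable equation of state p = P(μ), with the chain rule ∇p = P'(μ)∇μ
    (hP : Differentiable ℝ P)
    (heos : ∀ x, p x = P (μ x))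
    (hchain : ∀ x j, Dp x j = deriv P (μ x) * Dμ x j)
    -- p + μ nowhere zero
    (hpμ : ∀ x, p x + μ x ≠ 0)
    -- ∇_m C_{jkl}{}^m = 0 in its equivalent Codazzi form, with
    -- A = κ(p-μ)/(2-n), B = κ(p+μ), R = nA - B
    (hWeyl : ∀ x k l j,
        ((κ * (Dp x k - Dμ x k) / (2 - (n:ℝ))) * g x j l
          + κ * (Dp x k + Dμ x k) * u x j * u x l
          + κ * (p x + μ x) * (Du x k j * u x l + u x j * Du x k l))
        - ((κ * (Dp x l - Dμ x l) / (2 - (n:ℝ))) * g x j k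
          + κ * (Dp x l + Dμ x l) * u x j * u x k
          + κ * (p x + μ x) * (Du x l j * u x k + u x j * Du x l k))
      = (1/(2*((n:ℝ) - 1))) *
          (g x j l * ((n:ℝ) * (κ * (Dp x k - Dμ x k) / (2 - (n:ℝ)))
              - κ * (Dp x k + Dμ x k))
            - g x j k * ((n:ℝ) * (κ * (Dp x l - Dμ x l) / (2 - (n:ℝ)))
              - κ * (Dp x l + Dμ x l))))
    -- equations of motion (from ∇_k T^{kj} = 0)
    (hmot1 : ∀ x, (∑ k, ∑ a, ginv x k a * u x a * Dμ x k)
        + (p x + μ x) * (∑ k, ∑ a, ginv x k a * Du x k a) = 0)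
    (hmot2 : ∀ x j, Dp x j + u x j * (∑ k, ∑ a, ginv x k a * u x a * Dp x k)
        + (p x + μ x) * (∑ k, ∑ a, ginv x k a * u x a * Du x k j) = 0) :
    -- conclusion: u is geodesic
    ∀ x j, ∑ k, ∑ a, ginv x k a * u x a * Du x k j = 0 := by
  intro x j0
  set m : ℝ := (n : ℝ) with hm
  have hm4 : (4:ℝ) ≤ m := by rw [hm]; exact_mod_cast hn
  have hd : (2:ℝ) - m ≠ 0 := ne_of_lt (by linarith)
  have he : (2:ℝ)*(m - 1) ≠ 0 := ne_of_gt (by linarith)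
  set U : Fin n → ℝ := fun k => ∑ a, ginv x k a * u x a with hU
  have f1 : ∀ i, (∑ l, U l * g x i l) = u x i := by
    intro i
    calc (∑ l, U l * g x i l) = ∑ l, ∑ a, ginv x l a * u x a * g x i l := by
          refine Finset.sum_congr rfl fun l _ => ?_
          simp only [hU]
          rw [Finset.sum_mul]
      _ = ∑ a, ∑ l, ginv x l a * u x a * g x i l := Finset.sum_comm
      _ = ∑ a, u x a * (∑ l, ginv x a l * g x l i) := by
          refine Finset.sum_congr rfl fun a _ => ?_
          rw [Finset.mul_sum]
          refine Finset.sum_congr rfl fun l _ => ?_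
          rw [hginvsymm x l a, hg x i l]; ring
      _ = ∑ a, u x a * (if a = i then (1:ℝ) else 0) := by
          refine Finset.sum_congr rfl fun a _ => ?_
          rw [hginv x a i]
      _ = u x i := by simp
  have f1b : ∀ i, (∑ l, U l * g x l i) = u x i := by
    intro i
    rw [← f1 i]
    exact Finset.sum_congr rfl fun l _ => by rw [hg x l i]
  have f2 : (∑ l, U l * u x l) = -1 := by
    rw [← hunit x]
    refine Finset.sum_congr rfl fun l _ => ?_
    simp only [hU]
    rw [Finset.sum_mul]
    exact Finset.sum_congr rfl fun a _ => by ring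
  have f3 : ∀ k, (∑ i, U i * Du x k i) = 0 := by
    intro k
    rw [← hDu x k]
    refine Finset.sum_congr rfl fun i _ => ?_
    simp only [hU]
    rw [Finset.sum_mul]
  have f4 : (∑ jj, U jj * (∑ l, U l * Du x l jj)) = 0 := by
    calc (∑ jj, U jj * (∑ l, U l * Du x l jj))
        = ∑ jj, ∑ l, U l * (U jj * Du x l jj) := by
          refine Finset.sum_congr rfl fun jj _ => ?_
          rw [Finset.mul_sum]
          exact Finset.sum_congr rfl fun l _ => by ring
      _ = ∑ l, ∑ jj, U l * (U jj * Du x l jj) := Finset.sum_comm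
      _ = ∑ l, U l * (∑ jj, U jj * Du x l jj) := by
          refine Finset.sum_congr rfl fun l _ => ?_
          rw [Finset.mul_sum]
      _ = 0 := by simp only [f3, mul_zero, Finset.sum_const_zero]
  have S : (∑ jj, U jj * (∑ l, U l * (((κ * (Dp x j0 - Dμ x j0) / (2 - m)) * g x jj l + κ * (Dp x j0 + Dμ x j0) * u x jj * u x l + κ * (p x + μ x) * (Du x j0 jj * u x l + u x jj * Du x j0 l)) - ((κ * (Dp x l - Dμ x l) / (2 - m)) * g x jj j0 + κ * (Dp x l + Dμ x l) * u x jj * u x j0 + κ * (p x + μ x) * (Du x l jj * u x j0 + u x jj * Du x l j0)))))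
      = (∑ jj, U jj * (∑ l, U l * ((1/(2*(m - 1))) * (g x jj l * (m * (κ * (Dp x j0 - Dμ x j0) / (2 - m)) - κ * (Dp x j0 + Dμ x j0)) - g x jj j0 * (m * (κ * (Dp x l - Dμ x l) / (2 - m)) - κ * (Dp x l + Dμ x l)))))) := by
    refine Finset.sum_congr rfl fun jj _ => ?_
    have h : (∑ l, U l * (((κ * (Dp x j0 - Dμ x j0) / (2 - m)) * g x jj l + κ * (Dp x j0 + Dμ x j0) * u x jj * u x l + κ * (p x + μ x) * (Du x j0 jj * u x l + u x jj * Du x j0 l)) - ((κ * (Dp x l - Dμ x l) / (2 - m)) * g x jj j0 + κ * (Dp x l + Dμ x l) * u x jj * u x j0 + κ * (p x + μ x) * (Du x l jj * u x j0 + u x jj * Du x l j0)))) = (∑ l, U l * ((1/(2*(m - 1))) * (g x jj l * (m * (κ * (Dp x j0 - Dμ x j0) / (2 - m)) - κ * (Dp x j0 + Dμ x j0)) - g x jj j0 * (m * (κ * (Dp x l - Dμ x l) / (2 - m)) - κ * (Dp x l + Dμ x l))))) :=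
      Finset.sum_congr rfl fun l _ => by rw [hWeyl x j0 l jj]
    rw [h]
  have innerL : ∀ jj, (∑ l, U l * (((κ * (Dp x j0 - Dμ x j0) / (2 - m)) * g x jj l + κ * (Dp x j0 + Dμ x j0) * u x jj * u x l + κ * (p x + μ x) * (Du x j0 jj * u x l + u x jj * Du x j0 l)) - ((κ * (Dp x l - Dμ x l) / (2 - m)) * g x jj j0 + κ * (Dp x l + Dμ x l) * u x jj * u x j0 + κ * (p x + μ x) * (Du x l jj * u x j0 + u x jj * Du x l j0))))
      = (κ * (Dp x j0 - Dμ x j0) / (2 - m)) * u x jj - (κ * (Dp x j0 + Dμ x j0)) * u x jj - (κ * (p x + μ x)) * Du x j0 jj - (∑ l, U l * (κ * (Dp x l - Dμ x l) / (2 - m))) * g x jj j0 - (∑ l, U l * (κ * (Dp x l + Dμ x l))) * (u x jj * u x j0) - ((κ * (p x + μ x)) * u x j0) * (∑ l, U l * Du x l jj) - ((κ * (p x + μ x)) * (∑ l, U l * Du x l j0)) * u x jj := by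
    intro jj
    have step : ∀ l, U l * (((κ * (Dp x j0 - Dμ x j0) / (2 - m)) * g x jj l + κ * (Dp x j0 + Dμ x j0) * u x jj * u x l + κ * (p x + μ x) * (Du x j0 jj * u x l + u x jj * Du x j0 l)) - ((κ * (Dp x l - Dμ x l) / (2 - m)) * g x jj j0 + κ * (Dp x l + Dμ x l) * u x jj * u x j0 + κ * (p x + μ x) * (Du x l jj * u x j0 + u x jj * Du x l j0)))
        = (κ * (Dp x j0 - Dμ x j0) / (2 - m)) * (U l * g x jj l) + ((κ * (Dp x j0 + Dμ x j0)) * u x jj) * (U l * u x l)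
          + ((κ * (p x + μ x)) * Du x j0 jj) * (U l * u x l) + ((κ * (p x + μ x)) * u x jj) * (U l * Du x j0 l)
          - g x jj j0 * (U l * (κ * (Dp x l - Dμ x l) / (2 - m)))
          - (u x jj * u x j0) * (U l * (κ * (Dp x l + Dμ x l)))
          - ((κ * (p x + μ x)) * u x j0) * (U l * Du x l jj)
          - ((κ * (p x + μ x)) * u x jj) * (U l * Du x l j0) := fun l => by ring
    rw [Finset.sum_congr rfl fun l _ => step l]
    simp only [Finset.sum_add_distrib, Finset.sum_sub_distrib, ← Finset.mul_sum]
    rw [f1 jj, f2, f3 j0]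
    ring
  have innerR : ∀ jj, (∑ l, U l * ((1/(2*(m - 1))) * (g x jj l * (m * (κ * (Dp x j0 - Dμ x j0) / (2 - m)) - κ * (Dp x j0 + Dμ x j0)) - g x jj j0 * (m * (κ * (Dp x l - Dμ x l) / (2 - m)) - κ * (Dp x l + Dμ x l)))))
      = (1/(2*(m - 1))) * ((m * (κ * (Dp x j0 - Dμ x j0) / (2 - m)) - (κ * (Dp x j0 + Dμ x j0))) * u x jj - g x jj j0 * (m * (∑ l, U l * (κ * (Dp x l - Dμ x l) / (2 - m))) - (∑ l, U l * (κ * (Dp x l + Dμ x l))))) := by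
    intro jj
    have step : ∀ l, U l * ((1/(2*(m - 1))) * (g x jj l * (m * (κ * (Dp x j0 - Dμ x j0) / (2 - m)) - κ * (Dp x j0 + Dμ x j0)) - g x jj j0 * (m * (κ * (Dp x l - Dμ x l) / (2 - m)) - κ * (Dp x l + Dμ x l))))
        = ((1/(2*(m - 1))) * (m * (κ * (Dp x j0 - Dμ x j0) / (2 - m)) - (κ * (Dp x j0 + Dμ x j0)))) * (U l * g x jj l)
          - ((1/(2*(m - 1))) * (g x jj j0 * m)) * (U l * (κ * (Dp x l - Dμ x l) / (2 - m)))
          + ((1/(2*(m - 1))) * g x jj j0) * (U l * (κ * (Dp x l + Dμ x l))) := fun l => by ring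
    rw [Finset.sum_congr rfl fun l _ => step l]
    simp only [Finset.sum_add_distrib, Finset.sum_sub_distrib, ← Finset.mul_sum]
    rw [f1 jj]
    ring
  have SL : (∑ jj, U jj * (∑ l, U l * (((κ * (Dp x j0 - Dμ x j0) / (2 - m)) * g x jj l + κ * (Dp x j0 + Dμ x j0) * u x jj * u x l + κ * (p x + μ x) * (Du x j0 jj * u x l + u x jj * Du x j0 l)) - ((κ * (Dp x l - Dμ x l) / (2 - m)) * g x jj j0 + κ * (Dp x l + Dμ x l) * u x jj * u x j0 + κ * (p x + μ x) * (Du x l jj * u x j0 + u x jj * Du x l j0)))))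
      = -(κ * (Dp x j0 - Dμ x j0) / (2 - m)) + (κ * (Dp x j0 + Dμ x j0)) - (∑ l, U l * (κ * (Dp x l - Dμ x l) / (2 - m))) * u x j0 + (∑ l, U l * (κ * (Dp x l + Dμ x l))) * u x j0 + (κ * (p x + μ x)) * (∑ l, U l * Du x l j0) := by
    calc (∑ jj, U jj * (∑ l, U l * (((κ * (Dp x j0 - Dμ x j0) / (2 - m)) * g x jj l + κ * (Dp x j0 + Dμ x j0) * u x jj * u x l + κ * (p x + μ x) * (Du x j0 jj * u x l + u x jj * Du x j0 l)) - ((κ * (Dp x l - Dμ x l) / (2 - m)) * g x jj j0 + κ * (Dp x l + Dμ x l) * u x jj * u x j0 + κ * (p x + μ x) * (Du x l jj * u x j0 + u x jj * Du x l j0)))))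
        = ∑ jj, U jj * ((κ * (Dp x j0 - Dμ x j0) / (2 - m)) * u x jj - (κ * (Dp x j0 + Dμ x j0)) * u x jj - (κ * (p x + μ x)) * Du x j0 jj - (∑ l, U l * (κ * (Dp x l - Dμ x l) / (2 - m))) * g x jj j0 - (∑ l, U l * (κ * (Dp x l + Dμ x l))) * (u x jj * u x j0) - ((κ * (p x + μ x)) * u x j0) * (∑ l, U l * Du x l jj) - ((κ * (p x + μ x)) * (∑ l, U l * Du x l j0)) * u x jj) :=
          Finset.sum_congr rfl fun jj _ => by rw [innerL jj]
      _ = -(κ * (Dp x j0 - Dμ x j0) / (2 - m)) + (κ * (Dp x j0 + Dμ x j0)) - (∑ l, U l * (κ * (Dp x l - Dμ x l) / (2 - m))) * u x j0 + (∑ l, U l * (κ * (Dp x l + Dμ x l))) * u x j0 + (κ * (p x + μ x)) * (∑ l, U l * Du x l j0) := by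
          have step2 : ∀ jj, U jj * ((κ * (Dp x j0 - Dμ x j0) / (2 - m)) * u x jj - (κ * (Dp x j0 + Dμ x j0)) * u x jj - (κ * (p x + μ x)) * Du x j0 jj - (∑ l, U l * (κ * (Dp x l - Dμ x l) / (2 - m))) * g x jj j0 - (∑ l, U l * (κ * (Dp x l + Dμ x l))) * (u x jj * u x j0) - ((κ * (p x + μ x)) * u x j0) * (∑ l, U l * Du x l jj) - ((κ * (p x + μ x)) * (∑ l, U l * Du x l j0)) * u x jj)
              = (κ * (Dp x j0 - Dμ x j0) / (2 - m)) * (U jj * u x jj) - (κ * (Dp x j0 + Dμ x j0)) * (U jj * u x jj)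
                - (κ * (p x + μ x)) * (U jj * Du x j0 jj)
                - (∑ l, U l * (κ * (Dp x l - Dμ x l) / (2 - m))) * (U jj * g x jj j0)
                - ((∑ l, U l * (κ * (Dp x l + Dμ x l))) * u x j0) * (U jj * u x jj)
                - ((κ * (p x + μ x)) * u x j0) * (U jj * (∑ l, U l * Du x l jj))
                - ((κ * (p x + μ x)) * (∑ l, U l * Du x l j0)) * (U jj * u x jj) := fun jj => by ring
          rw [Finset.sum_congr rfl fun jj _ => step2 jj]
          simp only [Finset.sum_sub_distrib, ← Finset.mul_sum]
          rw [f2, f3 j0, f1b j0, f4]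
          ring
  have SR : (∑ jj, U jj * (∑ l, U l * ((1/(2*(m - 1))) * (g x jj l * (m * (κ * (Dp x j0 - Dμ x j0) / (2 - m)) - κ * (Dp x j0 + Dμ x j0)) - g x jj j0 * (m * (κ * (Dp x l - Dμ x l) / (2 - m)) - κ * (Dp x l + Dμ x l))))))
      = (1/(2*(m - 1))) * (-(m * (κ * (Dp x j0 - Dμ x j0) / (2 - m)) - (κ * (Dp x j0 + Dμ x j0))) - u x j0 * (m * (∑ l, U l * (κ * (Dp x l - Dμ x l) / (2 - m))) - (∑ l, U l * (κ * (Dp x l + Dμ x l))))) := by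
    calc (∑ jj, U jj * (∑ l, U l * ((1/(2*(m - 1))) * (g x jj l * (m * (κ * (Dp x j0 - Dμ x j0) / (2 - m)) - κ * (Dp x j0 + Dμ x j0)) - g x jj j0 * (m * (κ * (Dp x l - Dμ x l) / (2 - m)) - κ * (Dp x l + Dμ x l))))))
        = ∑ jj, U jj * ((1/(2*(m - 1))) * ((m * (κ * (Dp x j0 - Dμ x j0) / (2 - m)) - (κ * (Dp x j0 + Dμ x j0))) * u x jj - g x jj j0 * (m * (∑ l, U l * (κ * (Dp x l - Dμ x l) / (2 - m))) - (∑ l, U l * (κ * (Dp x l + Dμ x l)))))) :=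
          Finset.sum_congr rfl fun jj _ => by rw [innerR jj]
      _ = (1/(2*(m - 1))) * (-(m * (κ * (Dp x j0 - Dμ x j0) / (2 - m)) - (κ * (Dp x j0 + Dμ x j0))) - u x j0 * (m * (∑ l, U l * (κ * (Dp x l - Dμ x l) / (2 - m))) - (∑ l, U l * (κ * (Dp x l + Dμ x l))))) := by
          have step2 : ∀ jj, U jj * ((1/(2*(m - 1))) * ((m * (κ * (Dp x j0 - Dμ x j0) / (2 - m)) - (κ * (Dp x j0 + Dμ x j0))) * u x jj - g x jj j0 * (m * (∑ l, U l * (κ * (Dp x l - Dμ x l) / (2 - m))) - (∑ l, U l * (κ * (Dp x l + Dμ x l))))))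
              = ((1/(2*(m - 1))) * (m * (κ * (Dp x j0 - Dμ x j0) / (2 - m)) - (κ * (Dp x j0 + Dμ x j0)))) * (U jj * u x jj)
                - ((1/(2*(m - 1))) * (m * (∑ l, U l * (κ * (Dp x l - Dμ x l) / (2 - m))) - (∑ l, U l * (κ * (Dp x l + Dμ x l))))) * (U jj * g x jj j0) := fun jj => by ring
          rw [Finset.sum_congr rfl fun jj _ => step2 jj]
          simp only [Finset.sum_sub_distrib, ← Finset.mul_sum]
          rw [f2, f1b j0]
          ring
  have hE : (-(κ * (Dp x j0 - Dμ x j0) / (2 - m)) + (κ * (Dp x j0 + Dμ x j0)) - (∑ l, U l * (κ * (Dp x l - Dμ x l) / (2 - m))) * u x j0 + (∑ l, U l * (κ * (Dp x l + Dμ x l))) * u x j0 + (κ * (p x + μ x)) * (∑ l, U l * Du x l j0)) = (1/(2*(m - 1))) * (-(m * (κ * (Dp x j0 - Dμ x j0) / (2 - m)) - (κ * (Dp x j0 + Dμ x j0))) - u x j0 * (m * (∑ l, U l * (κ * (Dp x l - Dμ x l) / (2 - m))) - (∑ l, U l * (κ * (Dp x l + Dμ x l))))) := SL.symm.trans (S.trans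 SR)
  have hE' : 2*(m - 1) * (-(κ * (Dp x j0 - Dμ x j0) / (2 - m)) + (κ * (Dp x j0 + Dμ x j0)) - (∑ l, U l * (κ * (Dp x l - Dμ x l) / (2 - m))) * u x j0 + (∑ l, U l * (κ * (Dp x l + Dμ x l))) * u x j0 + (κ * (p x + μ x)) * (∑ l, U l * Du x l j0))
      = -(m * (κ * (Dp x j0 - Dμ x j0) / (2 - m)) - (κ * (Dp x j0 + Dμ x j0))) - u x j0 * (m * (∑ l, U l * (κ * (Dp x l - Dμ x l) / (2 - m))) - (∑ l, U l * (κ * (Dp x l + Dμ x l)))) := by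
    rw [hE, ← mul_assoc, mul_one_div, div_self he, one_mul]
  have h1 : (2 - m) * (κ * (Dp x j0 - Dμ x j0) / (2 - m)) = κ * (Dp x j0 - Dμ x j0) := by
    rw [mul_comm]; exact div_mul_cancel₀ _ hd
  have h2 : (2 - m) * (∑ l, U l * (κ * (Dp x l - Dμ x l) / (2 - m))) = κ * (∑ l, U l * Dp x l) - κ * (∑ l, U l * Dμ x l) := by
    rw [Finset.mul_sum]
    have stp : ∀ l, (2 - m) * (U l * (κ * (Dp x l - Dμ x l) / (2 - m)))
        = κ * (U l * Dp x l) - κ * (U l * Dμ x l) := by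
      intro l
      have e1 : (2 - m) * (κ * (Dp x l - Dμ x l) / (2 - m)) = κ * (Dp x l - Dμ x l) := by
        rw [mul_comm]; exact div_mul_cancel₀ _ hd
      linear_combination U l * e1
    rw [Finset.sum_congr rfl fun l _ => stp l, Finset.sum_sub_distrib,
      ← Finset.mul_sum, ← Finset.mul_sum]
  have h3 : (∑ l, U l * (κ * (Dp x l + Dμ x l)))
      = κ * (∑ l, U l * Dp x l) + κ * (∑ l, U l * Dμ x l) := by
    have stp : ∀ l, U l * (κ * (Dp x l + Dμ x l))
        = κ * (U l * Dp x l) + κ * (U l * Dμ x l) := fun l => by ring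
    rw [Finset.sum_congr rfl fun l _ => stp l, Finset.sum_add_distrib,
      ← Finset.mul_sum, ← Finset.mul_sum]
  have hpd : (∑ k, ∑ a, ginv x k a * u x a * Dp x k) = (∑ l, U l * Dp x l) := by
    refine Finset.sum_congr rfl fun k _ => ?_
    simp only [hU]
    rw [Finset.sum_mul]
  have hdu : (∑ k, ∑ a, ginv x k a * u x a * Du x k j0) = (∑ l, U l * Du x l j0) := by
    refine Finset.sum_congr rfl fun k _ => ?_
    simp only [hU]
    rw [Finset.sum_mul]
  have hH : Dp x j0 + u x j0 * (∑ l, U l * Dp x l) + (p x + μ x) * (∑ l, U l * Du x l j0) = 0 := by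
    rw [← hpd, ← hdu]; exact hmot2 x j0
  have key : (m - 2) * (2 * κ) * (Dμ x j0 + u x j0 * (∑ l, U l * Dμ x l)) = 0 := by
    linear_combination hE' - (2*(m - 1))*κ*hH - h1 - u x j0 * h2 - (2*m - 3) * u x j0 * h3
  have hne : (m - 2) * (2 * κ) ≠ 0 :=
    mul_ne_zero (ne_of_gt (by linarith)) (mul_ne_zero two_ne_zero hκ)
  have hDmu : Dμ x j0 + u x j0 * (∑ l, U l * Dμ x l) = 0 := by
    rcases mul_eq_zero.mp key with h | h
    · exact absurd h hne
    · exact h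
  have hpdot : (∑ l, U l * Dp x l) = deriv P (μ x) * (∑ l, U l * Dμ x l) := by
    rw [Finset.mul_sum]
    refine Finset.sum_congr rfl fun l _ => ?_
    rw [hchain x l]; ring
  have hDp0 : Dp x j0 + u x j0 * (∑ l, U l * Dp x l) = 0 := by
    rw [hchain x j0, hpdot]
    linear_combination deriv P (μ x) * hDmu
  have hAv : (p x + μ x) * (∑ l, U l * Du x l j0) = 0 := by linear_combination hH - hDp0
  have hAv0 : (∑ l, U l * Du x l j0) = 0 := by
    rcases mul_eq_zero.mp hAv with h | h
    · exact absurd h (hpμ x)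
    · exact h
  rw [hdu]
  exact hAv0
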